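/- Let T : C(X,ℂ) → C(Y,ℂ) be a bijective map satisfying ‖T(f+g)‖ = ‖T(f)+T(g)‖ and ‖T(fg)‖ = ‖T(f)T(g)‖ for all f, g. Then |T(1)(y)| = 1 for every y ∈ Y. -/

import Mathlib

variable {X Y : Type*} [TopologicalSpace X] [CompactSpace X] [T2Space X]
  [TopologicalSpace Y] [CompactSpace Y] [T2Space Y]

theorem stmt5 (T : C(X, ℂ) → C(Y, ℂ)) (hbij : Function.Bijective T)
    (h1 : ∀ f g : C(X, ℂ), ‖T (f + g)‖ = ‖T f + T g‖)
    (h2 : ∀ f g : C(X, ℂ), ‖T (f * g)‖ = ‖T f * T g‖) :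
    ∀ y : Y, ‖T 1 y‖ = 1 := by
  intro y
  have hY : Nonempty Y := ⟨y⟩
  set u := T 1 with hu
  -- ‖u‖ = 1
  obtain ⟨f, hf⟩ := hbij.2 (1 : C(Y, ℂ))
  have hnu : ‖u‖ = 1 := by
    have h := h2 f 1
    rw [mul_one, hf, one_mul] at h
    simpa [norm_one] using h.symm
  -- lower bound
  have hge : (1 : ℝ) ≤ ‖u y‖ := by
    by_contra hlt
    push_neg at hlt
    set c : ℝ := (1 + ‖u y‖) / 2 with hc
    have hc1 : c < 1 := by
      rw [hc]; linarith
    have hc0 : 0 ≤ c := by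
      have := norm_nonneg (u y); rw [hc]; linarith
    set U : Set Y := {z | ‖u z‖ < c} with hU
    have hUopen : IsOpen U := by
      have : Continuous fun z => ‖u z‖ :=
        continuous_norm.comp u.continuous
      exact isOpen_lt this continuous_const
    have hyU : y ∈ U := by
      simp only [hU, Set.mem_setOf_eq, hc]
      linarith
    obtain ⟨φ, hφ0, hφ1, hφI⟩ := exists_continuous_zero_one_of_isClosed
      (isClosed_compl_iff.mpr hUopen) (isClosed_singleton (x := y))
      (Set.disjoint_left.mpr fun a ha hay => ha (by rw [Set.mem_singleton_iff.mp hay]; exact hyU))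
    set ψ : C(Y, ℂ) := (⟨Complex.ofReal, Complex.continuous_ofReal⟩ : C(ℝ, ℂ)).comp φ
      with hψ
    obtain ⟨g, hg⟩ := hbij.2 ψ
    have key : ‖ψ‖ = ‖ψ * u‖ := by
      have h := h2 g 1
      rwa [mul_one, hg] at h
    have hψy : ψ y = 1 := by
      simp [hψ, hφ1 (Set.mem_singleton y)]
    have h1le : (1 : ℝ) ≤ ‖ψ‖ := by
      have := ψ.norm_coe_le_norm y
      rw [hψy] at this
      simpa using this
    have hle : ‖ψ * u‖ ≤ c := by
      apply ContinuousMap.norm_le _ hc0 |>.mpr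
      intro z
      simp only [ContinuousMap.mul_apply, norm_mul]
      by_cases hz : z ∈ U
      · have h1 : ‖ψ z‖ ≤ 1 := by
          simp only [hψ, ContinuousMap.comp_apply, ContinuousMap.coe_mk,
            Complex.norm_real]
          have := hφI z
          rw [Real.norm_eq_abs, abs_le]
          constructor <;> [linarith [this.1]; exact this.2]
        have h2' : ‖u z‖ ≤ c := le_of_lt hz
        calc ‖ψ z‖ * ‖u z‖ ≤ 1 * c := by
              apply mul_le_mul h1 h2' (norm_nonneg _) zero_le_one
          _ = c := one_mul c
      · have : φ z = 0 := hφ0 hz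
        simp [hψ, this, hc0]
    linarith [key ▸ h1le, hle, hc1]
  -- upper bound
  have hle : ‖u y‖ ≤ 1 := by
    have := u.norm_coe_le_norm y
    rw [hnu] at this
    simpa using this
  linarith
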